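/- For the greedy weighted maximum coverage algorithm, at each step the newly covered weight is at least 1/k times the remaining gap to the optimal k-set coverage; consequently the uncovered portion of the optimum shrinks by a factor of at least (1 - 1/k) per iteration. -/

import Mathlib

open Finset

lemma sum_biUnion_le_aux {ι β : Type*} [DecidableEq β] (T : Finset ι) (f : ι → Finset β)
    (g : β → ℝ) (hg : ∀ b, 0 ≤ g b) :
    ∑ u ∈ T.biUnion f, g u ≤ ∑ j ∈ T, ∑ u ∈ f j, g u := by
  classical
  induction T using Finset.induction_on with
  | empty => simp
  | @insert a s hx ih =>
    rw [Finset.biUnion_insert, Finset.sum_insert hx]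
    have h1 : ∑ u ∈ f a ∪ s.biUnion f, g u ≤ ∑ u ∈ f a, g u + ∑ u ∈ s.biUnion f, g u := by
      rw [← Finset.sum_union_inter]
      have : 0 ≤ ∑ u ∈ f a ∩ s.biUnion f, g u := Finset.sum_nonneg fun u _ => hg u
      linarith
    linarith

/-- Greedy weighted max coverage: each step closes at least a `1/k` fraction of the
gap to the optimal `k`-set coverage, hence the uncovered part of the optimum shrinks
geometrically with factor `(1 - 1/k)`. -/
theorem greedy_step_gap_bound {U : Type*} [DecidableEq U] [Fintype U] {m : ℕ}
    (w : U → NNReal) (S : Fin m → Finset U) (k : ℕ) (hk : 0 < k)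
    (pick : ℕ → Fin m)
    (covered : ℕ → Finset U)
    (hcov : ∀ i, covered i = (Finset.range i).biUnion (fun t => S (pick t)))
    (hgreedy : ∀ i, ∀ j : Fin m,
      ∑ u ∈ S j \ covered i, (w u : ℝ) ≤ ∑ u ∈ S (pick i) \ covered i, (w u : ℝ))
    (g : ℕ → ℝ) (hg : ∀ i, g i = ∑ u ∈ covered i, (w u : ℝ))
    (OPT : ℝ)
    (hOPT : IsGreatest {x : ℝ | ∃ T : Finset (Fin m), T.card = k ∧
      x = ∑ u ∈ T.biUnion S, (w u : ℝ)} OPT) :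
    (∀ i, i < k → (OPT - g i) / k ≤ g (i + 1) - g i) ∧
    (∀ i, i ≤ k → OPT - g i ≤ OPT * (1 - 1 / (k : ℝ)) ^ i) := by
  have hk' : (0 : ℝ) < (k : ℝ) := by exact_mod_cast hk
  obtain ⟨⟨T, hTcard, hTval⟩, -⟩ := hOPT
  -- g is monotone-ish: g (i+1) - g i equals the newly covered weight
  have hsub : ∀ i, covered i ⊆ covered (i + 1) := by
    intro i
    rw [hcov i, hcov (i + 1)]
    exact Finset.biUnion_subset_biUnion_of_subset_left _
      (Finset.range_subset_range.mpr (Nat.le_succ i))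
  have hdelta : ∀ i, g (i + 1) - g i = ∑ u ∈ S (pick i) \ covered i, (w u : ℝ) := by
    intro i
    have hset : covered (i + 1) \ covered i = S (pick i) \ covered i := by
      rw [hcov (i + 1), hcov i, Finset.range_add_one, Finset.biUnion_insert]
      ext u
      simp only [Finset.mem_sdiff, Finset.mem_union]
      tauto
    rw [hg, hg, ← Finset.sum_sdiff (hsub i), hset]
    ring
  -- key inequality: OPT - g i ≤ k * (g (i+1) - g i)
  have key : ∀ i, OPT - g i ≤ (k : ℝ) * (g (i + 1) - g i) := by
    intro i
    have h1 : OPT - g i ≤ ∑ u ∈ T.biUnion S \ covered i, (w u : ℝ) := by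
      have hle : ∑ u ∈ T.biUnion S ∩ covered i, (w u : ℝ) ≤ g i := by
        rw [hg]
        exact Finset.sum_le_sum_of_subset_of_nonneg (Finset.inter_subset_right)
          (fun u _ _ => (w u).coe_nonneg)
      have hsplit : OPT = ∑ u ∈ T.biUnion S \ covered i, (w u : ℝ) +
          ∑ u ∈ T.biUnion S ∩ covered i, (w u : ℝ) := by
        rw [hTval, ← Finset.sum_sdiff Finset.inter_subset_left,
          Finset.sdiff_inter_self_left]
      linarith
    have h2 : ∑ u ∈ T.biUnion S \ covered i, (w u : ℝ) ≤
        ∑ j ∈ T, ∑ u ∈ S j \ covered i, (w u : ℝ) := by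
      have hsubU : T.biUnion S \ covered i ⊆ T.biUnion (fun j => S j \ covered i) := by
        intro u hu
        simp only [Finset.mem_sdiff, Finset.mem_biUnion] at hu ⊢
        obtain ⟨⟨j, hj, hju⟩, hnc⟩ := hu
        exact ⟨j, hj, hju, hnc⟩
      calc ∑ u ∈ T.biUnion S \ covered i, (w u : ℝ)
          ≤ ∑ u ∈ T.biUnion (fun j => S j \ covered i), (w u : ℝ) :=
            Finset.sum_le_sum_of_subset_of_nonneg hsubU (fun u _ _ => (w u).coe_nonneg)
        _ ≤ ∑ j ∈ T, ∑ u ∈ S j \ covered i, (w u : ℝ) :=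
            sum_biUnion_le_aux T _ _ (fun u => (w u).coe_nonneg)
    have h3 : ∑ j ∈ T, ∑ u ∈ S j \ covered i, (w u : ℝ) ≤
        (k : ℝ) * (g (i + 1) - g i) := by
      calc ∑ j ∈ T, ∑ u ∈ S j \ covered i, (w u : ℝ)
          ≤ ∑ _j ∈ T, ∑ u ∈ S (pick i) \ covered i, (w u : ℝ) :=
            Finset.sum_le_sum (fun j _ => hgreedy i j)
        _ = (k : ℝ) * (g (i + 1) - g i) := by
            rw [Finset.sum_const, hTcard, hdelta, nsmul_eq_mul]
    linarith
  have part1 : ∀ i, i < k → (OPT - g i) / k ≤ g (i + 1) - g i := by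
    intro i _
    rw [div_le_iff₀ hk']
    linarith [key i, mul_comm (g (i + 1) - g i) (k : ℝ)]
  refine ⟨part1, ?_⟩
  have hOPTnn : 0 ≤ OPT := by
    rw [hTval]
    exact Finset.sum_nonneg (fun u _ => (w u).coe_nonneg)
  have hfac : (0 : ℝ) ≤ 1 - 1 / (k : ℝ) := by
    have : 1 / (k : ℝ) ≤ 1 := by
      rw [div_le_one hk']
      exact_mod_cast hk
    linarith
  intro i
  induction i with
  | zero =>
    intro _
    have : g 0 = 0 := by
      rw [hg, hcov]
      simp
    simp [this, hOPTnn]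
  | succ n ih =>
    intro hn
    have ihn := ih (Nat.le_of_succ_le hn)
    have hstep : OPT - g (n + 1) ≤ (OPT - g n) * (1 - 1 / (k : ℝ)) := by
      have hk2 := key n
      have : (OPT - g n) / k ≤ g (n + 1) - g n := by
        rw [div_le_iff₀ hk']
        linarith [mul_comm (g (n + 1) - g n) (k : ℝ)]
      have hexp : (OPT - g n) * (1 - 1 / (k : ℝ)) = (OPT - g n) - (OPT - g n) / k := by
        field_simp
      linarith
    calc OPT - g (n + 1) ≤ (OPT - g n) * (1 - 1 / (k : ℝ)) := hstep
      _ ≤ OPT * (1 - 1 / (k : ℝ)) ^ n * (1 - 1 / (k : ℝ)) :=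
          mul_le_mul_of_nonneg_right ihn hfac
      _ = OPT * (1 - 1 / (k : ℝ)) ^ (n + 1) := by ring
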